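/- Let t₁ ≥ t₂ ≥ ... ≥ t_{2M} be nonnegative reals. Among all partitions of {1,...,2M} into M unordered pairs, the partition {(1,2M), (2,2M−1), ..., (M,M+1)} maximizes the sum over pairs (i,j) of log₂(1 + t_i + t_j). -/

import Mathlib

/-- Rearrangement inequality for `log₂(1+·)`: for `0 ≤ b ≤ a` and `0 ≤ d ≤ c`,
pairing the large with the small gives a bigger sum. -/
lemma noma_key (a b c d : ℝ) (hb0 : 0 ≤ b) (hba : b ≤ a) (hd0 : 0 ≤ d) (hdc : d ≤ c) :
    Real.logb 2 (1+a+c) + Real.logb 2 (1+b+d) ≤ Real.logb 2 (1+a+d) + Real.logb 2 (1+b+c) := by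
  have ha0 : 0 ≤ a := hb0.trans hba
  have hc0 : 0 ≤ c := hd0.trans hdc
  have p1 : (0:ℝ) < 1+a+c := by linarith
  have p2 : (0:ℝ) < 1+b+d := by linarith
  have p3 : (0:ℝ) < 1+a+d := by linarith
  have p4 : (0:ℝ) < 1+b+c := by linarith
  rw [← Real.logb_mul p1.ne' p2.ne', ← Real.logb_mul p3.ne' p4.ne']
  exact (Real.logb_le_logb one_lt_two (mul_pos p1 p2) (mul_pos p3 p4)).mpr
    (by nlinarith [mul_nonneg (sub_nonneg.mpr hba) (sub_nonneg.mpr hdc)])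

lemma noma_rev_ne {M : ℕ} (w : Fin (2 * M)) : Fin.rev w ≠ w := by
  intro h
  have h1 := congrArg Fin.val h
  rw [Fin.val_rev] at h1
  have := w.isLt
  omega

/-- Halving lemma: a `rev`-symmetric sum over `Fin (2M)` is twice the sum over the first half. -/
lemma noma_half (M : ℕ) (h : Fin (2*M) → ℝ) (hsym : ∀ k, h (Fin.rev k) = h k) :
    ∑ k : Fin (2*M), h k
      = 2 * ∑ m : Fin M, h ⟨m, Nat.lt_of_lt_of_le m.isLt (by omega)⟩ := by
  rcases Nat.eq_zero_or_pos M with hM | hM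
  · subst hM; simp
  have hsplit := Finset.sum_filter_add_sum_filter_not Finset.univ
    (fun k : Fin (2*M) => (k:ℕ) < M) h
  have h2 : ∑ k ∈ Finset.univ.filter (fun k : Fin (2*M) => ¬ (k:ℕ) < M), h k
      = ∑ k ∈ Finset.univ.filter (fun k : Fin (2*M) => (k:ℕ) < M), h k := by
    refine Finset.sum_nbij' (i := Fin.rev) (j := Fin.rev) ?_ ?_ ?_ ?_ ?_
    · intro a ha
      simp only [Finset.mem_filter, Finset.mem_univ, true_and, not_lt] at ha ⊢
      rw [Fin.val_rev]; have := a.isLt; omega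
    · intro a ha
      simp only [Finset.mem_filter, Finset.mem_univ, true_and, not_lt] at ha ⊢
      rw [Fin.val_rev]; have := a.isLt; omega
    · intro a _; exact Fin.rev_rev a
    · intro a _; exact Fin.rev_rev a
    · intro a _; exact (hsym a).symm
  have h3 : ∑ k ∈ Finset.univ.filter (fun k : Fin (2*M) => (k:ℕ) < M), h k
      = ∑ m : Fin M, h ⟨m, Nat.lt_of_lt_of_le m.isLt (by omega)⟩ := by
    refine (Finset.sum_nbij' (i := fun m : Fin M => (⟨(m:ℕ), Nat.lt_of_lt_of_le m.isLt (by omega)⟩ : Fin (2*M)))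
      (j := fun k : Fin (2*M) => (⟨(k:ℕ) % M, Nat.mod_lt _ hM⟩ : Fin M)) ?_ ?_ ?_ ?_ ?_).symm
    · intro m _
      simp only [Finset.mem_filter, Finset.mem_univ, true_and]
      exact m.isLt
    · intro k _; exact Finset.mem_univ _
    · intro m _
      ext
      simp [Nat.mod_eq_of_lt m.isLt]
    · intro k hk
      simp only [Finset.mem_filter, Finset.mem_univ, true_and] at hk
      ext
      simp [Nat.mod_eq_of_lt hk]
    · intro m _; rfl
  rw [← hsplit, h2, h3]; ring

/-- Main combinatorial lemma: for any fixed-point-free involution `π` on `Fin (2M)`,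
the total rate is at most that of the reversal pairing. Proof by induction on (a bound
for) the number of mismatches with `Fin.rev`, via an exchange argument. -/
lemma noma_main (M : ℕ) (t : Fin (2*M) → ℝ) (ht0 : ∀ i, 0 ≤ t i)
    (hsort : ∀ i j : Fin (2*M), i ≤ j → t j ≤ t i) :
    ∀ N (π : Equiv.Perm (Fin (2*M))), (∀ z, π (π z) = z) → (∀ z, π z ≠ z) →
    (Finset.univ.filter (fun j : Fin (2*M) => π j ≠ Fin.rev j)).card ≤ N →
    ∑ z : Fin (2*M), Real.logb 2 (1 + t z + t (π z))
      ≤ ∑ z : Fin (2*M), Real.logb 2 (1 + t z + t (Fin.rev z)) := by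
  intro N
  induction N with
  | zero =>
    intro π hinv hfpf hcard
    have hS : (Finset.univ.filter (fun j : Fin (2*M) => π j ≠ Fin.rev j)) = ∅ :=
      Finset.card_eq_zero.mp (Nat.le_zero.mp hcard)
    have hall : ∀ j : Fin (2*M), π j = Fin.rev j := by
      intro j
      by_contra hj
      exact (Finset.filter_eq_empty_iff.mp hS (Finset.mem_univ j)) hj
    apply le_of_eq
    exact Finset.sum_congr rfl fun z _ => by rw [hall z]
  | succ N ih =>
    intro π hinv hfpf hcard
    by_cases hle : (Finset.univ.filter (fun j : Fin (2*M) => π j ≠ Fin.rev j)).card ≤ N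
    · exact ih π hinv hfpf hle
    set S := Finset.univ.filter (fun j : Fin (2*M) => π j ≠ Fin.rev j) with hSdef
    have hScard : S.card = N + 1 := le_antisymm hcard (not_le.mp hle)
    have hSne : S.Nonempty := Finset.card_pos.mp (by omega)
    -- closure of S under rev
    have hclos : ∀ j : Fin (2*M), π j ≠ Fin.rev j → π (Fin.rev j) ≠ Fin.rev (Fin.rev j) := by
      intro j hj hcon
      rw [Fin.rev_rev] at hcon
      apply hj
      have h2 := congrArg π hcon
      rw [hinv] at h2
      exact h2.symm
    set i := S.min' hSne with hidef
    have hiS : i ∈ S := S.min'_mem hSne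
    have himis : π i ≠ Fin.rev i := (Finset.mem_filter.mp hiS).2
    have hile : ∀ j ∈ S, i ≤ j := fun j hj => S.min'_le j hj
    set b := Fin.rev i with hbdef
    set x := π i with hxdef
    set y := π b with hydef
    have hπx : π x = i := hinv i
    have hπy : π y = b := hinv b
    -- membership in S
    have hbS : b ∈ S := Finset.mem_filter.mpr ⟨Finset.mem_univ _, hclos i himis⟩
    have hxmis : π x ≠ Fin.rev x := by
      rw [hπx]
      intro h
      exact himis (by rw [hbdef, h, Fin.rev_rev])
    have hxS : x ∈ S := Finset.mem_filter.mpr ⟨Finset.mem_univ _, hxmis⟩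
    have hymis : π y ≠ Fin.rev y := by
      rw [hπy]
      intro h
      have hyi : y = i := by rw [← Fin.rev_rev y, ← h, hbdef, Fin.rev_rev]
      exact himis (by rw [hxdef, ← hyi]; exact hπy)
    have hyS : y ∈ S := Finset.mem_filter.mpr ⟨Finset.mem_univ _, hymis⟩
    have hrevxS : Fin.rev x ∈ S := Finset.mem_filter.mpr ⟨Finset.mem_univ _, hclos x hxmis⟩
    -- distinctness
    have hib : i ≠ b := by rw [hbdef]; exact (noma_rev_ne i).symm
    have hix : i ≠ x := fun h => hfpf i (by rw [← hxdef]; exact h.symm)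
    have hiy : i ≠ y := by
      intro h
      exact himis (by rw [hxdef, h]; exact hπy)
    have hbx : b ≠ x := himis.symm
    have hby : b ≠ y := fun h => hfpf b (by rw [← hydef]; exact h.symm)
    have hxy : x ≠ y := by
      intro h
      have h2 := congrArg π h
      rw [hπx, hπy] at h2
      exact hib h2
    -- order facts
    have hiley : i ≤ y := hile y hyS
    have hxleb : x ≤ b := Fin.rev_le_rev.mp (by rw [Fin.rev_rev]; exact hile _ hrevxS)
    -- the exchanged involution
    set s : Equiv.Perm (Fin (2*M)) := Equiv.swap b x with hsdef
    set π' : Equiv.Perm (Fin (2*M)) := (s * π) * s with hπ'def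
    have hπ'app : ∀ z, π' z = s (π (s z)) := fun z => rfl
    have hsi : s i = i := Equiv.swap_apply_of_ne_of_ne hib hix
    have hsy : s y = y := Equiv.swap_apply_of_ne_of_ne (Ne.symm hby) (Ne.symm hxy)
    have hπ'i : π' i = b := by rw [hπ'app, hsi, ← hxdef, Equiv.swap_apply_right]
    have hπ'b : π' b = i := by rw [hπ'app, Equiv.swap_apply_left, hπx, hsi]
    have hπ'x : π' x = y := by rw [hπ'app, Equiv.swap_apply_right, ← hydef, hsy]
    have hπ'y : π' y = x := by rw [hπ'app, hsy, hπy, Equiv.swap_apply_left]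
    have hπ'out : ∀ z, z ≠ i → z ≠ b → z ≠ x → z ≠ y → π' z = π z := by
      intro z hzi hzb hzx hzy
      rw [hπ'app, Equiv.swap_apply_of_ne_of_ne hzb hzx]
      apply Equiv.swap_apply_of_ne_of_ne
      · intro h; exact hzy (π.injective (h.trans hπy.symm))
      · intro h; exact hzi (π.injective (h.trans hxdef))
    -- π' is a fixed-point-free involution
    have hinv' : ∀ z, π' (π' z) = z := by
      intro z
      rw [hπ'app, hπ'app, Equiv.swap_apply_self, hinv, Equiv.swap_apply_self]
    have hfpf' : ∀ z, π' z ≠ z := by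
      intro z h
      rw [hπ'app] at h
      have h2 := congrArg s h
      rw [Equiv.swap_apply_self] at h2
      exact hfpf (s z) h2
    -- mismatch set of π' is strictly smaller
    have hsub : (Finset.univ.filter (fun j : Fin (2*M) => π' j ≠ Fin.rev j)) ⊆ S.erase i := by
      intro j hj
      have hjmis : π' j ≠ Fin.rev j := (Finset.mem_filter.mp hj).2
      rw [Finset.mem_erase]
      constructor
      · intro h; subst h; exact hjmis (by rw [hπ'i])
      · rw [hSdef, Finset.mem_filter]
        refine ⟨Finset.mem_univ _, ?_⟩
        intro hmatch
        -- j matched for π, show matched for π'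
        have hjS : j ∉ S := by
          rw [hSdef, Finset.mem_filter]
          push_neg
          intro _; exact hmatch
        have hji : j ≠ i := fun h => hjS (h ▸ hiS)
        have hjb : j ≠ b := fun h => hjS (h ▸ hbS)
        have hjx : j ≠ x := fun h => hjS (h ▸ hxS)
        have hjy : j ≠ y := fun h => hjS (h ▸ hyS)
        exact hjmis (by rw [hπ'out j hji hjb hjx hjy, hmatch])
    have hcard' : (Finset.univ.filter (fun j : Fin (2*M) => π' j ≠ Fin.rev j)).card ≤ N := by
      have := Finset.card_le_card hsub
      rw [Finset.card_erase_of_mem hiS, hScard] at this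
      omega
    -- the exchange does not decrease the objective
    have hstep : ∑ z : Fin (2*M), Real.logb 2 (1 + t z + t (π z))
        ≤ ∑ z : Fin (2*M), Real.logb 2 (1 + t z + t (π' z)) := by
      classical
      set A : Finset (Fin (2*M)) := {i, b, x, y} with hAdef
      rw [← Finset.sum_sdiff (Finset.subset_univ A),
        ← Finset.sum_sdiff (Finset.subset_univ A) (f := fun z => Real.logb 2 (1 + t z + t (π' z)))]
      apply add_le_add
      · apply le_of_eq
        apply Finset.sum_congr rfl
        intro z hz
        simp only [hAdef, Finset.mem_sdiff, Finset.mem_univ, true_and, Finset.mem_insert,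
          Finset.mem_singleton, not_or] at hz
        rw [hπ'out z hz.1 hz.2.1 hz.2.2.1 hz.2.2.2]
      · have hA : A = insert i (insert b (insert x ({y} : Finset (Fin (2*M))))) := rfl
        rw [hA, Finset.sum_insert (by simp [hib, hix, hiy]),
          Finset.sum_insert (by simp [hbx, hby]),
          Finset.sum_insert (by simp [hxy]), Finset.sum_singleton,
          Finset.sum_insert (by simp [hib, hix, hiy]),
          Finset.sum_insert (by simp [hbx, hby]),
          Finset.sum_insert (by simp [hxy]), Finset.sum_singleton]
        rw [hπ'i, hπ'b, hπ'x, hπ'y, ← hxdef, ← hydef, hπx, hπy]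
        have hty : t y ≤ t i := hsort i y hiley
        have htb : t b ≤ t x := hsort x b hxleb
        have key4 := noma_key (t i) (t y) (t x) (t b) (ht0 y) hty (ht0 b) htb
        have e1 : Real.logb 2 (1 + t b + t y) = Real.logb 2 (1 + t y + t b) := by
          congr 1; ring
        have e2 : Real.logb 2 (1 + t x + t i) = Real.logb 2 (1 + t i + t x) := by
          congr 1; ring
        have e3 : Real.logb 2 (1 + t b + t i) = Real.logb 2 (1 + t i + t b) := by
          congr 1; ring
        have e4 : Real.logb 2 (1 + t x + t y) = Real.logb 2 (1 + t y + t x) := by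
          congr 1; ring
        linarith [key4]
    calc ∑ z : Fin (2*M), Real.logb 2 (1 + t z + t (π z))
        ≤ ∑ z : Fin (2*M), Real.logb 2 (1 + t z + t (π' z)) := hstep
      _ ≤ ∑ z : Fin (2*M), Real.logb 2 (1 + t z + t (Fin.rev z)) := ih π' hinv' hfpf' hcard'

/-- For sorted nonnegative SNRs `t 0 ≥ t 1 ≥ ⋯ ≥ t (2M-1)`, the strongest-with-weakest
pairing `{(0,2M-1),(1,2M-2),…}` maximizes the total rate `∑ log₂(1+t_i+t_j)` over all
partitions of the `2M` users into `M` pairs (every pairing is represented by a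
permutation `σ`, with pairs `{σ m, σ (2M-1-m)}` for `m < M`). -/
theorem stmt_1 (M : ℕ) (t : Fin (2 * M) → ℝ) (ht0 : ∀ i, 0 ≤ t i)
    (hsort : ∀ i j : Fin (2 * M), i ≤ j → t j ≤ t i)
    (σ : Equiv.Perm (Fin (2 * M))) :
    ∑ m : Fin M, Real.logb 2
        (1 + t (σ ⟨m, by have := m.isLt; omega⟩) + t (σ ⟨2 * M - 1 - m, by have := m.isLt; omega⟩))
      ≤ ∑ m : Fin M, Real.logb 2
        (1 + t ⟨m, by have := m.isLt; omega⟩ + t ⟨2 * M - 1 - m, by have := m.isLt; omega⟩) := by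
  classical
  set π : Equiv.Perm (Fin (2*M)) := (σ * Fin.revPerm) * σ⁻¹ with hπdef
  have hπapp : ∀ z, π z = σ (Fin.rev (σ⁻¹ z)) := by
    intro z
    simp [hπdef, Equiv.Perm.mul_apply]
  have hinv : ∀ z, π (π z) = z := by
    intro z
    rw [hπapp, hπapp, Equiv.Perm.coe_inv, Equiv.symm_apply_apply, Fin.rev_rev, Equiv.apply_symm_apply]
  have hfpf : ∀ z, π z ≠ z := by
    intro z h
    rw [hπapp] at h
    have h2 : Fin.rev (σ⁻¹ z) = σ⁻¹ z := by
      have h3 := congrArg (fun w => σ⁻¹ w) h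
      simp only [Equiv.Perm.coe_inv, Equiv.symm_apply_apply] at h3
      exact h3
    exact noma_rev_ne _ h2
  have hmain := noma_main M t ht0 hsort
    (Finset.univ.filter (fun j : Fin (2*M) => π j ≠ Fin.rev j)).card π hinv hfpf le_rfl
  -- rewrite LHS of hmain
  have hLHS : ∑ z : Fin (2*M), Real.logb 2 (1 + t z + t (π z))
      = ∑ k : Fin (2*M), Real.logb 2 (1 + t (σ k) + t (σ (Fin.rev k))) := by
    rw [← Equiv.sum_comp σ (fun z => Real.logb 2 (1 + t z + t (π z)))]
    apply Finset.sum_congr rfl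
    intro k _
    rw [hπapp, Equiv.Perm.coe_inv, Equiv.symm_apply_apply]
  have hrevmk : ∀ m : Fin M, Fin.rev (⟨m, by have := m.isLt; omega⟩ : Fin (2*M))
      = ⟨2 * M - 1 - m, by have := m.isLt; omega⟩ := by
    intro m
    ext
    simp only [Fin.val_rev]
    have := m.isLt
    omega
  have h1 : ∑ k : Fin (2*M), Real.logb 2 (1 + t (σ k) + t (σ (Fin.rev k)))
      = 2 * ∑ m : Fin M, Real.logb 2
        (1 + t (σ ⟨m, by have := m.isLt; omega⟩)
          + t (σ ⟨2 * M - 1 - m, by have := m.isLt; omega⟩)) := by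
    rw [noma_half M (fun k => Real.logb 2 (1 + t (σ k) + t (σ (Fin.rev k))))
      (by
        intro k
        show Real.logb 2 (1 + t (σ (Fin.rev k)) + t (σ (Fin.rev (Fin.rev k))))
          = Real.logb 2 (1 + t (σ k) + t (σ (Fin.rev k)))
        rw [Fin.rev_rev]; congr 1; ring)]
    congr 1
    apply Finset.sum_congr rfl
    intro m _
    rw [hrevmk m]
  have h2 : ∑ z : Fin (2*M), Real.logb 2 (1 + t z + t (Fin.rev z))
      = 2 * ∑ m : Fin M, Real.logb 2
        (1 + t ⟨m, by have := m.isLt; omega⟩ + t ⟨2 * M - 1 - m, by have := m.isLt; omega⟩) := by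
    rw [noma_half M (fun k => Real.logb 2 (1 + t k + t (Fin.rev k)))
      (by
        intro k
        show Real.logb 2 (1 + t (Fin.rev k) + t (Fin.rev (Fin.rev k)))
          = Real.logb 2 (1 + t k + t (Fin.rev k))
        rw [Fin.rev_rev]; congr 1; ring)]
    congr 1
    apply Finset.sum_congr rfl
    intro m _
    rw [hrevmk m]
  rw [hLHS, h1, h2] at hmain
  linarith
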